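/- arXiv:1808.00085 — 2 statements merged into one kernel-verified Lean document; each statement's English description precedes it below -/
import Mathlib

section
/- Let ν ≤ 2 and let ω ∈ C²(ℝ^ν, ℝ) have a global minimum m at x_0, so 0 ≤ ω(k) - m ≤ C|k - x_0|² on a ball B_r(x_0) for some C, r > 0. If |v| ≥ δ > 0 on B_r(x_0), then ∫_{ℝ^ν} |v(k)|² / (ω(k) - m) dk = ∞. -/
open MeasureTheory
open scoped ENNReal

/-- In dimension `ν ≤ 2`, if `ω ∈ C²` attains its global minimum `m` at `x₀`
(so that `0 ≤ ω(k) - m ≤ C‖k - x₀‖²` on a ball `B_r(x₀)`) and `|v| ≥ δ > 0` on that ball,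
then `∫ |v(k)|²/(ω(k) - m) dk = ∞`. -/
theorem stmt6
    (ν : ℕ) (hν1 : 1 ≤ ν) (hν2 : ν ≤ 2)
    (ω : EuclideanSpace ℝ (Fin ν) → ℝ) (hω : ContDiff ℝ 2 ω)
    (v : EuclideanSpace ℝ (Fin ν) → ℂ) (hv : Measurable v)
    (m : ℝ) (x0 : EuclideanSpace ℝ (Fin ν)) (hmin : ∀ k, m ≤ ω k) (hm : ω x0 = m)
    (C r δ : ℝ) (hC : 0 < C) (hr : 0 < r) (hδ : 0 < δ)
    (hquad : ∀ k ∈ Metric.ball x0 r, ω k - m ≤ C * ‖k - x0‖ ^ 2)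
    (hlow : ∀ k ∈ Metric.ball x0 r, δ ≤ ‖v k‖) :
    ∫⁻ k, ENNReal.ofReal (‖v k‖ ^ 2) / ENNReal.ofReal (ω k - m) ∂volume = ⊤ := by
  set f : EuclideanSpace ℝ (Fin ν) → ℝ≥0∞ :=
    fun k => ENNReal.ofReal (‖v k‖ ^ 2) / ENNReal.ofReal (ω k - m) with hf
  have hfmeas : Measurable f := by
    apply Measurable.div
    · exact (hv.norm.pow measurable_const).ennreal_ofReal
    · exact ((hω.continuous.measurable).sub measurable_const).ennreal_ofReal
  set ρ : ℕ → ℝ := fun n => r / 2 ^ n with hρ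
  have hρpos : ∀ n, 0 < ρ n := fun n => div_pos hr (by positivity)
  have hρle : ∀ n, ρ n ≤ r := fun n =>
    div_le_self hr.le (one_le_pow₀ (by norm_num))
  have hρanti : ∀ m n : ℕ, m ≤ n → ρ n ≤ ρ m := by
    intro a b hab
    exact div_le_div_of_nonneg_left hr.le (by positivity)
      (pow_le_pow_right₀ (by norm_num) hab)
  set A : ℕ → Set (EuclideanSpace ℝ (Fin ν)) :=
    fun n => Metric.ball x0 (ρ n) \ Metric.ball x0 (ρ (n + 1)) with hA
  have hAmeas : ∀ n, MeasurableSet (A n) :=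
    fun n => measurableSet_ball.diff measurableSet_ball
  have hAdisj : Pairwise (Function.onFun Disjoint A) := by
    have key : ∀ a b : ℕ, a < b → Disjoint (A a) (A b) := by
      intro a b hab
      have : A b ⊆ Metric.ball x0 (ρ (a + 1)) :=
        Set.diff_subset.trans (Metric.ball_subset_ball (hρanti _ _ hab))
      exact (Set.disjoint_sdiff_left).mono_right this
    intro a b hab
    rcases hab.lt_or_gt with h | h
    · exact key a b h
    · exact (key b a h).symm
  set V : ℝ≥0∞ := volume (Metric.ball (0 : EuclideanSpace ℝ (Fin ν)) 1) with hV
  have hVpos : V ≠ 0 := (Metric.measure_ball_pos volume 0 one_pos).ne'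
  have hVfin : V ≠ ⊤ := measure_ball_lt_top.ne
  set K : ℝ := δ ^ 2 * (1 - (1 / 2 : ℝ) ^ ν) / (C * r ^ (2 - ν)) with hK
  have hhalf : (0:ℝ) < 1 - (1 / 2 : ℝ) ^ ν := by
    have : ((1:ℝ)/2) ^ ν < 1 := pow_lt_one₀ (by norm_num) (by norm_num) (by omega)
    linarith
  have hKpos : 0 < K := by
    apply div_pos (by positivity) (by positivity)
  -- main lower bound on each annulus
  have key : ∀ n, ENNReal.ofReal K * V ≤ ∫⁻ k in A n, f k ∂volume := by
    intro n
    have hsub : A n ⊆ Metric.ball x0 r :=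
      Set.diff_subset.trans (Metric.ball_subset_ball (hρle n))
    -- pointwise bound
    have hpt : ∀ k ∈ A n,
        ENNReal.ofReal (δ ^ 2) / ENNReal.ofReal (C * ρ n ^ 2) ≤ f k := by
      intro k hk
      have hkr : k ∈ Metric.ball x0 r := hsub hk
      have h1 : δ ^ 2 ≤ ‖v k‖ ^ 2 := by
        have := hlow k hkr
        nlinarith [norm_nonneg (v k)]
      have hnorm : ‖k - x0‖ < ρ n := by
        have := hk.1
        rwa [Metric.mem_ball, dist_eq_norm] at this
      have h2 : ω k - m ≤ C * ρ n ^ 2 := by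
        refine (hquad k hkr).trans ?_
        have : ‖k - x0‖ ^ 2 ≤ ρ n ^ 2 := by
          nlinarith [norm_nonneg (k - x0)]
        nlinarith
      exact ENNReal.div_le_div (ENNReal.ofReal_le_ofReal h1)
        (ENNReal.ofReal_le_ofReal h2)
    -- volume of annulus
    have hvol : ENNReal.ofReal (ρ n ^ ν - ρ (n + 1) ^ ν) * V ≤ volume (A n) := by
      have hb1 : volume (Metric.ball x0 (ρ n)) = ENNReal.ofReal (ρ n ^ ν) * V := by
        rw [Measure.addHaar_ball_of_pos volume x0 (hρpos n), finrank_euclideanSpace,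
          Fintype.card_fin]
      have hb2 : volume (Metric.ball x0 (ρ (n + 1))) =
          ENNReal.ofReal (ρ (n + 1) ^ ν) * V := by
        rw [Measure.addHaar_ball_of_pos volume x0 (hρpos (n + 1)), finrank_euclideanSpace,
          Fintype.card_fin]
      calc ENNReal.ofReal (ρ n ^ ν - ρ (n + 1) ^ ν) * V
          = (ENNReal.ofReal (ρ n ^ ν) - ENNReal.ofReal (ρ (n + 1) ^ ν)) * V := by
            rw [ENNReal.ofReal_sub _ (by positivity)]
        _ = ENNReal.ofReal (ρ n ^ ν) * V - ENNReal.ofReal (ρ (n + 1) ^ ν) * V := by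
            rw [ENNReal.sub_mul (fun _ _ => hVfin)]
        _ = volume (Metric.ball x0 (ρ n)) - volume (Metric.ball x0 (ρ (n + 1))) := by
            rw [hb1, hb2]
        _ ≤ volume (A n) := le_measure_diff
    -- the constant bound
    have hconst : ENNReal.ofReal K ≤
        ENNReal.ofReal (δ ^ 2) / ENNReal.ofReal (C * ρ n ^ 2) *
          ENNReal.ofReal (ρ n ^ ν - ρ (n + 1) ^ ν) := by
      have hCρ : (0:ℝ) < C * ρ n ^ 2 := by positivity
      rw [div_eq_mul_inv, mul_right_comm, ← div_eq_mul_inv,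
        ← ENNReal.ofReal_mul (by positivity),
        ← ENNReal.ofReal_div_of_pos hCρ]
      apply ENNReal.ofReal_le_ofReal
      -- real inequality
      have hsucc : ρ (n + 1) = ρ n / 2 := by
        simp only [hρ, pow_succ]
        ring
      have hd : ρ n ^ ν - ρ (n + 1) ^ ν = ρ n ^ ν * (1 - (1 / 2 : ℝ) ^ ν) := by
        rw [hsucc, div_pow]
        ring
      rw [hd, hK]
      rw [div_le_div_iff₀ (by positivity) (by positivity)]
      have hρν : ρ n ^ 2 = ρ n ^ ν * ρ n ^ (2 - ν) := by
        rw [← pow_add]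
        congr 1
        omega
      have hle : ρ n ^ (2 - ν) ≤ r ^ (2 - ν) :=
        pow_le_pow_left₀ (hρpos n).le (hρle n) _
      calc δ ^ 2 * (1 - (1/2:ℝ) ^ ν) * (C * ρ n ^ 2)
          = δ ^ 2 * (1 - (1/2:ℝ) ^ ν) * C * (ρ n ^ ν * ρ n ^ (2 - ν)) := by
            rw [hρν]; ring
        _ ≤ δ ^ 2 * (1 - (1/2:ℝ) ^ ν) * C * (ρ n ^ ν * r ^ (2 - ν)) := by
            have hnn : 0 ≤ δ ^ 2 * (1 - (1/2:ℝ) ^ ν) * C := by positivity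
            have hρn : (0:ℝ) ≤ ρ n ^ ν := by positivity
            nlinarith [mul_le_mul_of_nonneg_left hle hρn]
        _ = δ ^ 2 * (ρ n ^ ν * (1 - (1/2:ℝ) ^ ν)) * (C * r ^ (2 - ν)) := by ring
    calc ENNReal.ofReal K * V
        ≤ ENNReal.ofReal (δ ^ 2) / ENNReal.ofReal (C * ρ n ^ 2) *
            ENNReal.ofReal (ρ n ^ ν - ρ (n + 1) ^ ν) * V :=
          mul_le_mul_left hconst V
      _ = ENNReal.ofReal (δ ^ 2) / ENNReal.ofReal (C * ρ n ^ 2) *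
            (ENNReal.ofReal (ρ n ^ ν - ρ (n + 1) ^ ν) * V) := by ring
      _ ≤ ENNReal.ofReal (δ ^ 2) / ENNReal.ofReal (C * ρ n ^ 2) * volume (A n) :=
          mul_le_mul_right hvol _
      _ = ∫⁻ _ in A n, (ENNReal.ofReal (δ ^ 2) / ENNReal.ofReal (C * ρ n ^ 2)) ∂volume := by
          rw [setLIntegral_const]
      _ ≤ ∫⁻ k in A n, f k ∂volume := setLIntegral_mono hfmeas hpt
  rw [eq_top_iff]
  calc (⊤ : ℝ≥0∞)
      = ∑' _ : ℕ, ENNReal.ofReal K * V := by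
        rw [ENNReal.tsum_const_eq_top_of_ne_zero]
        exact mul_ne_zero (ENNReal.ofReal_pos.2 hKpos).ne' hVpos
    _ ≤ ∑' n : ℕ, ∫⁻ k in A n, f k ∂volume := ENNReal.tsum_le_tsum key
    _ = ∫⁻ k in ⋃ n, A n, f k ∂volume := (lintegral_iUnion hAmeas hAdisj f).symm
    _ ≤ ∫⁻ k, f k ∂volume := setLIntegral_le_lintegral _ _
end

section
/- Let A be self-adjoint with compact resolvent, bounded below, and let {W_g} be unitary self-adjoint operators converging weakly to 0 as g → ∞. Then for any η ∈ ℝ, the operators A + η W_g converge to A in norm resolvent sense: ‖(A + ηW_g - i)^{-1} - (A - i)^{-1}‖ → 0. -/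
open Filter ContinuousLinearMap

local notation "⟪" x ", " y "⟫" => @inner ℂ _ _ x y

lemma unitary_norm_apply' {H : Type*} [NormedAddCommGroup H] [InnerProductSpace ℂ H]
    [CompleteSpace H] (W : H →L[ℂ] H) (hW : W ∈ unitary (H →L[ℂ] H)) (x : H) :
    ‖W x‖ = ‖x‖ := by
  have h1 : star W * W = 1 := hW.1
  have hinner : ⟪W x, W x⟫ = ⟪x, x⟫ := by
    rw [← ContinuousLinearMap.adjoint_inner_left, ← ContinuousLinearMap.star_eq_adjoint]
    have : (star W) (W x) = (star W * W) x := rfl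
    rw [this, h1]; rfl
  have h3 : ‖W x‖^2 = ‖x‖^2 := by
    rw [← inner_self_eq_norm_sq (𝕜 := ℂ), ← inner_self_eq_norm_sq (𝕜 := ℂ), hinner]
  calc ‖W x‖ = Real.sqrt (‖W x‖^2) := (Real.sqrt_sq (norm_nonneg _)).symm
    _ = Real.sqrt (‖x‖^2) := by rw [h3]
    _ = ‖x‖ := Real.sqrt_sq (norm_nonneg _)

lemma single_vec {H : Type*} [NormedAddCommGroup H] [InnerProductSpace ℂ H] [CompleteSpace H]
    (W : ℝ → (H →L[ℂ] H)) (hWu : ∀ g, W g ∈ unitary (H →L[ℂ] H))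
    (hweak : ∀ x y : H,
      Filter.Tendsto (fun g => (inner ℂ x ((W g) y) : ℂ)) Filter.atTop (nhds 0))
    (R : H →L[ℂ] H) (hR : IsCompactOperator R) (hRnorm : ‖R‖ ≤ 1) (u : H) :
    Tendsto (fun g => ‖R ((W g) u)‖) atTop (nhds 0) := by
  rw [Metric.tendsto_nhds]
  intro ε hε
  set M : ℝ := ‖u‖ with hM
  have hcomp : IsCompact (closure (R '' Metric.closedBall 0 M)) :=
    hR.isCompact_closure_image_of_bounded Metric.isBounded_closedBall
  have htb : TotallyBounded (closure (R '' Metric.closedBall 0 M)) := hcomp.totallyBounded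
  set δ : ℝ := ε^2 / (2 * (M + 1)) with hδdef
  have hM0 : (0:ℝ) ≤ M := norm_nonneg u
  have hδ : 0 < δ := by positivity
  obtain ⟨t, htfin, htcov⟩ := (Metric.totallyBounded_iff.mp htb) δ hδ
  have hev : ∀ᶠ g in atTop, ∀ w ∈ t, ‖⟪(ContinuousLinearMap.adjoint R) w, (W g) u⟫‖ < δ := by
    rw [eventually_all_finite htfin]
    intro w _
    have h0 := (hweak ((ContinuousLinearMap.adjoint R) w) u).norm
    simp only [norm_zero] at h0
    exact h0.eventually_lt_const hδ
  filter_upwards [hev] with g hg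
  set v : H := R ((W g) u) with hv
  have hvnorm : ‖v‖ ≤ M := by
    calc ‖v‖ ≤ ‖R‖ * ‖(W g) u‖ := R.le_opNorm _
      _ ≤ 1 * ‖(W g) u‖ := by gcongr
      _ = M := by rw [one_mul, unitary_norm_apply' _ (hWu g)]
  have hvmem : v ∈ closure (R '' Metric.closedBall 0 M) := by
    apply subset_closure
    exact ⟨(W g) u, by simp [Metric.mem_closedBall, dist_zero_right,
      unitary_norm_apply' _ (hWu g)]; exact le_of_eq hM.symm, rfl⟩
  obtain ⟨w, hwt, hwv⟩ := Set.mem_iUnion₂.mp (htcov hvmem)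
  have hvw : ‖v - w‖ < δ := by rwa [Metric.mem_ball, dist_eq_norm] at hwv
  have hsplit : ⟪v, v⟫ = ⟪v - w, v⟫ + ⟪w, v⟫ := by rw [inner_sub_left]; ring
  have hwvin : ‖⟪w, v⟫‖ < δ := by
    have : ⟪w, v⟫ = ⟪(ContinuousLinearMap.adjoint R) w, (W g) u⟫ := by
      rw [ContinuousLinearMap.adjoint_inner_left]
    rw [this]; exact hg w hwt
  have key : ‖v‖^2 < δ * M + δ := by
    calc ‖v‖^2 = RCLike.re ⟪v, v⟫ := (inner_self_eq_norm_sq (𝕜 := ℂ) v).symm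
      _ ≤ ‖⟪v, v⟫‖ := RCLike.re_le_norm _
      _ ≤ ‖⟪v - w, v⟫‖ + ‖⟪w, v⟫‖ := by rw [hsplit]; exact norm_add_le _ _
      _ ≤ ‖v - w‖ * ‖v‖ + ‖⟪w, v⟫‖ := by gcongr; exact norm_inner_le_norm _ _
      _ ≤ δ * M + ‖⟪w, v⟫‖ := by gcongr
      _ < δ * M + δ := by linarith
  have hsq : ‖v‖^2 < ε^2 := by
    calc ‖v‖^2 < δ * M + δ := key
      _ = δ * (M + 1) := by ring
      _ = ε^2 / 2 := by rw [hδdef]; field_simp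
      _ < ε^2 := by nlinarith
  have hvlt : ‖v‖ < ε := by nlinarith [norm_nonneg v]
  simpa [dist_eq_norm] using hvlt

lemma op_tendsto {H : Type*} [NormedAddCommGroup H] [InnerProductSpace ℂ H] [CompleteSpace H]
    (W : ℝ → (H →L[ℂ] H)) (hWu : ∀ g, W g ∈ unitary (H →L[ℂ] H))
    (hweak : ∀ x y : H,
      Filter.Tendsto (fun g => (inner ℂ x ((W g) y) : ℂ)) Filter.atTop (nhds 0))
    (R : H →L[ℂ] H) (hR : IsCompactOperator R) (hRnorm : ‖R‖ ≤ 1) :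
    Tendsto (fun g => ‖(R * W g * R : H →L[ℂ] H)‖) atTop (nhds 0) := by
  rw [Metric.tendsto_nhds]
  intro ε hε
  have hcomp : IsCompact (closure (R '' Metric.closedBall 0 1)) :=
    hR.isCompact_closure_image_of_bounded Metric.isBounded_closedBall
  obtain ⟨t, htfin, htcov⟩ := (Metric.totallyBounded_iff.mp hcomp.totallyBounded) (ε/4)
    (by positivity)
  have hev : ∀ᶠ g in atTop, ∀ u ∈ t, ‖R ((W g) u)‖ < ε/4 := by
    rw [eventually_all_finite htfin]
    intro u _
    exact (single_vec W hWu hweak R hR hRnorm u).eventually_lt_const (by positivity)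
  filter_upwards [hev] with g hg
  have hbound : ‖(R * W g * R : H →L[ℂ] H)‖ ≤ ε/2 := by
    apply ContinuousLinearMap.opNorm_le_bound _ (by positivity)
    intro x
    rcases eq_or_ne x 0 with rfl | hx
    · simp
    · have hxn : (0:ℝ) < ‖x‖ := norm_pos_iff.mpr hx
      set y : H := (‖x‖:ℂ)⁻¹ • x with hy
      have hyn : ‖y‖ = 1 := by
        rw [hy, norm_smul]
        simp [norm_inv, hxn.ne']
      have hRy : R y ∈ closure (R '' Metric.closedBall 0 1) :=
        subset_closure ⟨y, by simp [Metric.mem_closedBall, dist_zero_right, hyn], rfl⟩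
      obtain ⟨u, hut, huy⟩ := Set.mem_iUnion₂.mp (htcov hRy)
      have huy' : ‖R y - u‖ < ε/4 := by rwa [Metric.mem_ball, dist_eq_norm] at huy
      have hTy : ‖R ((W g) (R y))‖ < ε/2 := by
        have h1 : R ((W g) (R y)) = R ((W g) (R y - u)) + R ((W g) u) := by
          rw [← map_add, ← map_add, sub_add_cancel]
        rw [h1]
        calc ‖R ((W g) (R y - u)) + R ((W g) u)‖
            ≤ ‖R ((W g) (R y - u))‖ + ‖R ((W g) u)‖ := norm_add_le _ _
          _ ≤ ‖R‖ * ‖(W g) (R y - u)‖ + ‖R ((W g) u)‖ := by gcongr; exact R.le_opNorm _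
          _ ≤ 1 * ‖R y - u‖ + ‖R ((W g) u)‖ := by
              rw [unitary_norm_apply' _ (hWu g)]; gcongr
          _ < 1 * (ε/4) + ε/4 := by
              have h2 := hg u hut; have h3 := huy'; linarith
          _ = ε/2 := by ring
      have hxsmul : (R * W g * R : H →L[ℂ] H) x = (‖x‖:ℂ) • (R ((W g) (R y))) := by
        have : x = (‖x‖:ℂ) • y := by
          rw [hy, smul_smul]
          rw [mul_inv_cancel₀ (by exact_mod_cast hxn.ne')]
          simp
        conv_lhs => rw [this]
        simp [ContinuousLinearMap.mul_apply]
      calc ‖(R * W g * R : H →L[ℂ] H) x‖ = ‖x‖ * ‖R ((W g) (R y))‖ := by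
            rw [hxsmul, norm_smul]; simp
        _ ≤ ‖x‖ * (ε/2) := mul_le_mul_of_nonneg_left hTy.le (norm_nonneg x)
        _ = ε/2 * ‖x‖ := by ring
  rw [Real.dist_eq, sub_zero, abs_of_nonneg (norm_nonneg _)]
  linarith



/-- Norm resolvent convergence `A + ηW_g → A` for `A` self-adjoint with
compact resolvent and unitary self-adjoint `W_g ⇀ 0`.  The (possibly unbounded)
operator `A` is represented by its resolvent `R = (A - i)⁻¹`, assumed compact, and
`Rg g = (A + ηW_g - i)⁻¹`, related by the second resolvent identity and with the
standard bound `‖Rg g‖ ≤ 1`.  Conclusion: `‖Rg g - R‖ → 0`. -/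
theorem stmt15
    {H : Type*} [NormedAddCommGroup H] [InnerProductSpace ℂ H] [CompleteSpace H]
    (η : ℝ)
    (W : ℝ → (H →L[ℂ] H)) (hWu : ∀ g, W g ∈ unitary (H →L[ℂ] H))
    (hWsa : ∀ g, IsSelfAdjoint (W g))
    (hweak : ∀ x y : H,
      Filter.Tendsto (fun g => (inner ℂ x ((W g) y) : ℂ)) Filter.atTop (nhds 0))
    (R : H →L[ℂ] H) (hR : IsCompactOperator R) (hRnorm : ‖R‖ ≤ 1)
    (Rg : ℝ → (H →L[ℂ] H)) (hRgnorm : ∀ g, ‖Rg g‖ ≤ 1)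
    (hres : ∀ g, Rg g - R = -(η : ℂ) • (Rg g * W g * R)) :
    Filter.Tendsto (fun g => ‖Rg g - R‖) Filter.atTop (nhds 0) := by
  have hWnorm : ∀ g, ‖W g‖ ≤ 1 := fun g =>
    ContinuousLinearMap.opNorm_le_bound _ zero_le_one (fun x => by
      rw [unitary_norm_apply' _ (hWu g), one_mul])
  set C : ℝ := |η| * (|η| + 1) with hC
  have hkey := op_tendsto W hWu hweak R hR hRnorm
  have hbound : ∀ g, ‖Rg g - R‖ ≤ C * ‖(R * W g * R : H →L[ℂ] H)‖ := by
    intro g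
    set D := Rg g - R with hD
    set K : H →L[ℂ] H := R * W g * R with hK
    have e1 : D = -(η:ℂ) • (D * W g * R) + -(η:ℂ) • K := by
      calc D = -(η:ℂ) • (Rg g * W g * R) := hres g
        _ = -(η:ℂ) • ((D + R) * W g * R) := by rw [hD, sub_add_cancel]
        _ = -(η:ℂ) • (D * W g * R + K) := by rw [add_mul, add_mul, hK]
        _ = -(η:ℂ) • (D * W g * R) + -(η:ℂ) • K := smul_add _ _ _
    have hetanorm : ‖(-(η:ℂ))‖ = |η| := by
      rw [norm_neg, Complex.norm_real, Real.norm_eq_abs]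
    have e2 : ‖D * W g * R‖ ≤ |η| * ‖K‖ := by
      have : D * W g * R = -(η:ℂ) • ((Rg g * W g) * K) := by
        rw [hD, hres g, hK]
        simp only [smul_mul_assoc, mul_assoc]
      rw [this, norm_smul, hetanorm]
      gcongr
      calc ‖(Rg g * W g) * K‖ ≤ ‖Rg g * W g‖ * ‖K‖ := norm_mul_le _ _
        _ ≤ 1 * ‖K‖ := by
            gcongr
            calc ‖Rg g * W g‖ ≤ ‖Rg g‖ * ‖W g‖ := norm_mul_le _ _
              _ ≤ 1 * 1 := by gcongr <;> [exact hRgnorm g; exact hWnorm g]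
              _ = 1 := one_mul 1
        _ = ‖K‖ := one_mul _
    calc ‖D‖ = ‖-(η:ℂ) • (D * W g * R) + -(η:ℂ) • K‖ := by conv_lhs => rw [e1]
      _ ≤ ‖-(η:ℂ) • (D * W g * R)‖ + ‖-(η:ℂ) • K‖ := norm_add_le _ _
      _ = |η| * ‖D * W g * R‖ + |η| * ‖K‖ := by rw [norm_smul, norm_smul, hetanorm]
      _ ≤ |η| * (|η| * ‖K‖) + |η| * ‖K‖ := by gcongr
      _ = C * ‖K‖ := by rw [hC]; ring
  have hCk : Tendsto (fun g => C * ‖(R * W g * R : H →L[ℂ] H)‖) atTop (nhds 0) := by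
    simpa using hkey.const_mul C
  exact squeeze_zero (fun g => norm_nonneg _) hbound hCk
end
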